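/- For every finite graph G and positive integer r, the sum over all eigenvalues λ_i of G of λ_i^{2r} is at most the sum over vertices v of λ₁(G_r(v))^{2r}, where G_r(v) is the subgraph induced by vertices at distance at most r from v. -/

import Mathlib

open Matrix SimpleGraph Finset
open scoped Classical RealInnerProductSpace

noncomputable section

/-- The adjacency matrix of a graph is Hermitian (real symmetric). -/
lemma adjHerm {V : Type} [Fintype V] [DecidableEq V] (G : SimpleGraph V) :
    (G.adjMatrix ℝ).IsHermitian := by
  have h := G.isSymm_adjMatrix (α := ℝ)
  simpa [Matrix.IsHermitian, Matrix.conjTranspose_eq_transpose_of_trivial] using h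

/-- The spectral radius (largest adjacency eigenvalue) `λ₁(G)` of a graph. -/
def specRad {V : Type} [Fintype V] [DecidableEq V] (G : SimpleGraph V) : ℝ :=
  ⨆ i, (adjHerm G).eigenvalues i

/-- The `j`-th largest adjacency eigenvalue of `G` (1-indexed, with multiplicity):
entry `card V - j` of the increasingly sorted list of eigenvalues. -/
def nthEig {V : Type} [Fintype V] [DecidableEq V] (G : SimpleGraph V) (j : ℕ) : ℝ :=
  (Multiset.sort (Finset.univ.val.map (adjHerm G).eigenvalues) (· ≤ ·)).getD
    (Fintype.card V - j) 0

/-- The multiplicity of `μ` as an adjacency eigenvalue of `G`. -/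
def eigMult {V : Type} [Fintype V] [DecidableEq V] (G : SimpleGraph V) (μ : ℝ) : ℕ :=
  Module.finrank ℝ (Module.End.eigenspace (Matrix.toLin' (G.adjMatrix ℝ)) μ)

/-- The ball of radius `r` around `v`: all vertices at graph distance at most `r` from `v`. -/
def ball {V : Type} (G : SimpleGraph V) (v : V) (r : ℕ) : Set V := {u | G.dist v u ≤ r}

/-! ### Auxiliary spectral lemmas -/

lemma specConjPow {n : Type} [Fintype n] [DecidableEq n] (A : Matrix n n ℝ)
    (hA : A.IsHermitian) (k : ℕ) :
    A ^ k = (hA.eigenvectorUnitary : Matrix n n ℝ) *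
      (Matrix.diagonal ((RCLike.ofReal : ℝ → ℝ) ∘ hA.eigenvalues)) ^ k *
      star (hA.eigenvectorUnitary : Matrix n n ℝ) := by
  set U := (hA.eigenvectorUnitary : Matrix n n ℝ) with hU
  set D := Matrix.diagonal ((RCLike.ofReal : ℝ → ℝ) ∘ hA.eigenvalues) with hD
  have h1 : U * star U = 1 := Matrix.mem_unitaryGroup_iff.mp hA.eigenvectorUnitary.2
  have h3 : star U * A * U = D := by
    rw [hD, ← hA.conjStarAlgAut_star_eigenvectorUnitary, Unitary.conjStarAlgAut_apply,
      Unitary.coe_star, star_star]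
  induction k with
  | zero => simpa using h1.symm
  | succ k ih =>
    rw [pow_succ, pow_succ, ih]
    calc U * D ^ k * star U * A
        = U * D ^ k * star U * A * (U * star U) := by rw [h1, Matrix.mul_one]
      _ = U * (D ^ k * (star U * A * U)) * star U := by simp only [Matrix.mul_assoc]
      _ = U * (D ^ k * D) * star U := by rw [h3]

lemma specTracePow {n : Type} [Fintype n] [DecidableEq n] (A : Matrix n n ℝ)
    (hA : A.IsHermitian) (k : ℕ) :
    (A ^ k).trace = ∑ i, hA.eigenvalues i ^ k := by
  rw [specConjPow A hA k, Matrix.trace_mul_cycle,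
    Matrix.mem_unitaryGroup_iff'.mp hA.eigenvectorUnitary.2, one_mul, Matrix.diagonal_pow,
    Matrix.trace_diagonal]
  simp [Function.comp]

lemma specDiagPow {n : Type} [Fintype n] [DecidableEq n] (A : Matrix n n ℝ)
    (hA : A.IsHermitian) (k : ℕ) (v : n) :
    (A ^ k) v v = ∑ i, ((hA.eigenvectorUnitary : Matrix n n ℝ) v i) ^ 2
      * hA.eigenvalues i ^ k := by
  rw [specConjPow A hA k, Matrix.diagonal_pow, Matrix.mul_apply]
  refine Finset.sum_congr rfl fun i _ => ?_
  simp only [Matrix.mul_diagonal, Matrix.star_apply, Matrix.conjTranspose_apply,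
    Function.comp_apply, Pi.pow_apply]
  simp [Matrix.star_eq_conjTranspose, Matrix.conjTranspose_apply]
  ring

lemma specRowSq {n : Type} [Fintype n] [DecidableEq n] (A : Matrix n n ℝ)
    (hA : A.IsHermitian) (v : n) :
    ∑ i, ((hA.eigenvectorUnitary : Matrix n n ℝ) v i) ^ 2 = 1 := by
  have h1 : (hA.eigenvectorUnitary : Matrix n n ℝ) * star (hA.eigenvectorUnitary : Matrix n n ℝ)
      = 1 := Matrix.mem_unitaryGroup_iff.mp hA.eigenvectorUnitary.2
  have := congrFun (congrFun h1 v) v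
  simp only [Matrix.mul_apply, Matrix.one_apply_eq, Matrix.conjTranspose_apply] at this
  rw [← this]
  refine Finset.sum_congr rfl fun i _ => ?_
  simp [sq]

lemma specRayleigh {n : Type} [Fintype n] [DecidableEq n] [Nonempty n] (A : Matrix n n ℝ)
    (hA : A.IsHermitian) (y : n → ℝ) (hy : ∑ u, y u ^ 2 = 1) :
    y ⬝ᵥ (A *ᵥ y) ≤ ⨆ i, hA.eigenvalues i := by
  set U := (hA.eigenvectorUnitary : Matrix n n ℝ) with hUdef
  have h1 : U * star U = 1 := Matrix.mem_unitaryGroup_iff.mp hA.eigenvectorUnitary.2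
  set c : n → ℝ := fun i => ∑ u, U u i * y u with hc
  have hyU : y ᵥ* U = c := by
    funext i
    simp [Matrix.vecMul, dotProduct, hc, mul_comm]
  have hsU : star U *ᵥ y = c := by
    funext i
    simp [Matrix.mulVec, dotProduct, hc, Matrix.conjTranspose_apply]
  have hcc : ∑ i, c i ^ 2 = 1 := by
    have : y ⬝ᵥ ((U * star U) *ᵥ y) = ∑ u, y u ^ 2 := by
      rw [h1]
      simp [dotProduct, sq]
    rw [← Matrix.mulVec_mulVec, Matrix.dotProduct_mulVec, hyU, hsU] at this
    rw [← hy, ← this]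
    simp [dotProduct, sq]
  have hval : y ⬝ᵥ (A *ᵥ y) = ∑ i, hA.eigenvalues i * c i ^ 2 := by
    conv_lhs => rw [show A = A ^ 1 by rw [pow_one], specConjPow A hA 1, pow_one]
    rw [← Matrix.mulVec_mulVec, Matrix.dotProduct_mulVec, ← Matrix.vecMul_vecMul, hyU, hsU]
    simp only [Matrix.vecMul_diagonal, dotProduct, Function.comp_apply,
      RCLike.ofReal_real_eq_id, id_eq]
    refine Finset.sum_congr rfl fun i _ => ?_
    ring
  rw [hval]
  have hbdd : BddAbove (Set.range hA.eigenvalues) := (Set.finite_range _).bddAbove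
  calc ∑ i, hA.eigenvalues i * c i ^ 2 ≤ ∑ i, (⨆ j, hA.eigenvalues j) * c i ^ 2 := by
        refine Finset.sum_le_sum fun i _ => ?_
        exact mul_le_mul_of_nonneg_right (le_ciSup hbdd i) (sq_nonneg _)
    _ = ⨆ j, hA.eigenvalues j := by rw [← Finset.mul_sum, hcc, mul_one]

lemma specAbsEig {n : Type} [Fintype n] [DecidableEq n] (G : SimpleGraph n) [Nonempty n]
    (hA : (G.adjMatrix ℝ).IsHermitian) (j : n) :
    |hA.eigenvalues j| ≤ ⨆ i, hA.eigenvalues i := by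
  set A := G.adjMatrix ℝ with hAdef
  set x : n → ℝ := ⇑(hA.eigenvectorBasis j) with hx
  have hAx : A *ᵥ x = hA.eigenvalues j • x := hA.mulVec_eigenvectorBasis j
  have hnorm : ∑ u, x u ^ 2 = 1 := by
    have h := hA.eigenvectorBasis.orthonormal.1 j
    have h2 := congrArg (· ^ 2) h
    rw [EuclideanSpace.norm_eq] at h2
    simp only [Real.norm_eq_abs, sq_abs] at h2
    rw [Real.sq_sqrt (by positivity)] at h2
    simpa using h2
  set y : n → ℝ := fun u => |x u| with hy
  have hy1 : ∑ u, y u ^ 2 = 1 := by simpa [hy, sq_abs] using hnorm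
  have hval : hA.eigenvalues j = x ⬝ᵥ (A *ᵥ x) := by
    rw [hAx]
    have h3 : x ⬝ᵥ (hA.eigenvalues j • x) = hA.eigenvalues j * ∑ u, x u ^ 2 := by
      simp only [dotProduct, Pi.smul_apply, smul_eq_mul, Finset.mul_sum]
      exact Finset.sum_congr rfl fun u _ => by ring
    rw [h3, hnorm, mul_one]
  have hAnn : ∀ u w, 0 ≤ A u w := by
    intro u w
    simp only [hAdef, SimpleGraph.adjMatrix_apply]
    split <;> norm_num
  have h1 : |hA.eigenvalues j| ≤ y ⬝ᵥ (A *ᵥ y) := by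
    rw [hval]
    calc |x ⬝ᵥ (A *ᵥ x)| ≤ ∑ u, |x u * (A *ᵥ x) u| := Finset.abs_sum_le_sum_abs _ _
      _ ≤ ∑ u, y u * (A *ᵥ y) u := by
          refine Finset.sum_le_sum fun u _ => ?_
          rw [abs_mul]
          refine mul_le_mul_of_nonneg_left ?_ (abs_nonneg _)
          calc |(A *ᵥ x) u| ≤ ∑ w, |A u w * x w| := by
                rw [Matrix.mulVec, dotProduct]
                exact Finset.abs_sum_le_sum_abs _ _
            _ = (A *ᵥ y) u := by
                rw [Matrix.mulVec, dotProduct]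
                refine Finset.sum_congr rfl fun w _ => ?_
                rw [abs_mul, abs_of_nonneg (hAnn u w)]
      _ = y ⬝ᵥ (A *ᵥ y) := rfl
  exact h1.trans (specRayleigh A hA y hy1)

lemma specDiagPowLe {n : Type} [Fintype n] [DecidableEq n] (G : SimpleGraph n) [Nonempty n]
    (hA : (G.adjMatrix ℝ).IsHermitian) (r : ℕ) (v : n) :
    ((G.adjMatrix ℝ) ^ (2 * r)) v v ≤ (⨆ i, hA.eigenvalues i) ^ (2 * r) := by
  rw [specDiagPow _ hA]
  calc ∑ i, ((hA.eigenvectorUnitary : Matrix n n ℝ) v i) ^ 2 * hA.eigenvalues i ^ (2 * r)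
      ≤ ∑ i, ((hA.eigenvectorUnitary : Matrix n n ℝ) v i) ^ 2
          * (⨆ j, hA.eigenvalues j) ^ (2 * r) := by
        refine Finset.sum_le_sum fun i _ => ?_
        refine mul_le_mul_of_nonneg_left ?_ (sq_nonneg _)
        have h1 : hA.eigenvalues i ^ (2 * r) = |hA.eigenvalues i| ^ (2 * r) := by
          rw [← abs_pow, abs_of_nonneg (even_two_mul r |>.pow_nonneg _)]
        rw [h1]
        exact pow_le_pow_left₀ (abs_nonneg _) (specAbsEig G hA i) _
    _ = (⨆ j, hA.eigenvalues j) ^ (2 * r) := by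
        rw [← Finset.sum_mul, specRowSq _ hA, one_mul]

/-! ### Walk lifting to the induced ball -/

def liftWalk {V : Type} {G : SimpleGraph V} {s : Set V} :
    ∀ {u w : V} (p : G.Walk u w) (hs : ∀ x ∈ p.support, x ∈ s),
      (G.induce s).Walk ⟨u, hs u p.start_mem_support⟩ ⟨w, hs w p.end_mem_support⟩
  | _, _, SimpleGraph.Walk.nil, _ => SimpleGraph.Walk.nil
  | _, _, SimpleGraph.Walk.cons h p, hs =>
      SimpleGraph.Walk.cons (by exact h)
        (liftWalk p fun x hx => hs x
          (by rw [SimpleGraph.Walk.support_cons]; exact List.mem_cons_of_mem _ hx))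

lemma liftWalk_map {V : Type} {G : SimpleGraph V} {s : Set V} :
    ∀ {u w : V} (p : G.Walk u w) (hs : ∀ x ∈ p.support, x ∈ s),
      (liftWalk p hs).map (SimpleGraph.Embedding.induce s).toHom = p
  | _, _, SimpleGraph.Walk.nil, _ => rfl
  | _, _, SimpleGraph.Walk.cons h p, hs => by
      rw [liftWalk]; exact congrArg (SimpleGraph.Walk.cons h) (liftWalk_map p _)

lemma supp_in_ball {V : Type} {G : SimpleGraph V} {v : V} {r : ℕ} (p : G.Walk v v)
    (hp : p.length = 2 * r) : ∀ x ∈ p.support, x ∈ _root_.ball G v r := by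
  intro x hx
  have h1 : G.dist v x ≤ (p.takeUntil x hx).length := SimpleGraph.dist_le _
  have h2 : G.dist v x ≤ (p.dropUntil x hx).length := by
    rw [SimpleGraph.dist_comm]; exact SimpleGraph.dist_le _
  have h3 : (p.takeUntil x hx).length + (p.dropUntil x hx).length = 2 * r := by
    rw [← SimpleGraph.Walk.length_append, SimpleGraph.Walk.take_spec]; exact hp
  simp only [_root_.ball, Set.mem_setOf_eq]
  omega

lemma card_walk_le {V : Type} [Fintype V] [DecidableEq V] (G : SimpleGraph V) (v : V) (r : ℕ)
    (hv : v ∈ _root_.ball G v r) :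
    Fintype.card {p : G.Walk v v // p.length = 2 * r} ≤
      Fintype.card {p : (G.induce (_root_.ball G v r)).Walk ⟨v, hv⟩ ⟨v, hv⟩ // p.length = 2 * r} := by
  have hf : ∀ p : {p : G.Walk v v // p.length = 2 * r},
      (liftWalk p.1 (supp_in_ball p.1 p.2)).length = 2 * r := by
    intro p
    have := congrArg SimpleGraph.Walk.length (liftWalk_map p.1 (supp_in_ball p.1 p.2))
    rw [SimpleGraph.Walk.length_map] at this
    rw [this]; exact p.2
  refine Fintype.card_le_of_injective
    (fun p => ⟨liftWalk p.1 (supp_in_ball p.1 p.2), hf p⟩) ?_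
  intro p q h
  have h1 : liftWalk p.1 (supp_in_ball p.1 p.2) = liftWalk q.1 (supp_in_ball q.1 q.2) :=
    congrArg Subtype.val h
  have h2 := congrArg (SimpleGraph.Walk.map (SimpleGraph.Embedding.induce (_root_.ball G v r)).toHom) h1
  rw [liftWalk_map, liftWalk_map] at h2
  exact Subtype.ext h2

/-- For every graph `G` and positive integer `r`, the sum of the `2r`-th powers of the
eigenvalues of `G` is at most the sum over vertices `v` of `λ₁(G_r(v))^(2r)`, where `G_r(v)`
is the subgraph induced by vertices at distance at most `r` from `v`. -/
theorem stmt3 {V : Type} [Fintype V] [DecidableEq V] (G : SimpleGraph V) (r : ℕ)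
    (hr : 1 ≤ r) :
    ∑ i, (adjHerm G).eigenvalues i ^ (2 * r) ≤
      ∑ v, specRad (G.induce (_root_.ball G v r)) ^ (2 * r) := by
  rw [← specTracePow (G.adjMatrix ℝ) (adjHerm G) (2 * r), Matrix.trace]
  refine Finset.sum_le_sum fun v _ => ?_
  have hv : v ∈ _root_.ball G v r := by
    simp [_root_.ball, SimpleGraph.dist_self]
  haveI : Nonempty ↥(_root_.ball G v r) := ⟨⟨v, hv⟩⟩
  have e1 : (G.adjMatrix ℝ ^ (2 * r)).diag v
      = (Fintype.card {p : G.Walk v v // p.length = 2 * r} : ℝ) := by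
    rw [Matrix.diag_apply, SimpleGraph.adjMatrix_pow_apply_eq_card_walk]
    norm_cast
  have e2 : ((G.induce (_root_.ball G v r)).adjMatrix ℝ ^ (2 * r)) ⟨v, hv⟩ ⟨v, hv⟩
      = (Fintype.card
          {p : (G.induce (_root_.ball G v r)).Walk ⟨v, hv⟩ ⟨v, hv⟩ // p.length = 2 * r} : ℝ) := by
    rw [SimpleGraph.adjMatrix_pow_apply_eq_card_walk]
    norm_cast
  calc (G.adjMatrix ℝ ^ (2 * r)).diag v
      = (Fintype.card {p : G.Walk v v // p.length = 2 * r} : ℝ) := e1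
    _ ≤ (Fintype.card
          {p : (G.induce (_root_.ball G v r)).Walk ⟨v, hv⟩ ⟨v, hv⟩ // p.length = 2 * r} : ℝ) :=
        Nat.cast_le.mpr (card_walk_le G v r hv)
    _ = ((G.induce (_root_.ball G v r)).adjMatrix ℝ ^ (2 * r)) ⟨v, hv⟩ ⟨v, hv⟩ := e2.symm
    _ ≤ specRad (G.induce (_root_.ball G v r)) ^ (2 * r) :=
        specDiagPowLe (G.induce (_root_.ball G v r)) (adjHerm _) r _

end
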